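/- With the setup of Theorem 1, let p be a prime with p > m such that f(p) is squarefree, where f(x) = ∏_{i=1}^{q₀−1}(q·x^d + C_i) · ∏_{j=1}^{q₁−1}(q·x^d + D_j). Then gcd(q·m, q·p^d + C_i) = 1 and gcd(q·m, q·p^d + D_j) = 1 for all i, j. -/

import Mathlib

open Polynomial

/-- `a(x) = ∏_{i=1}^{q₀-1} (x + i·q₂·m·(q-1)!)`. -/
noncomputable def aPoly (q₀ q₂ q : ℕ) (m : ℤ) : Polynomial ℤ :=
  ∏ i ∈ Finset.Icc 1 (q₀ - 1), (X + C ((i : ℤ) * q₂ * m * (Nat.factorial (q - 1) : ℤ)))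

/-- `b(x) = ∏_{j=1}^{q₁-1} (x + j·m·(q-1)!)`. -/
noncomputable def bPoly (q₁ q : ℕ) (m : ℤ) : Polynomial ℤ :=
  ∏ j ∈ Finset.Icc 1 (q₁ - 1), (X + C ((j : ℤ) * m * (Nat.factorial (q - 1) : ℤ)))

/-- `G(x) = q · a(x) · b(x)`. -/
noncomputable def GPoly (q₀ q₁ q₂ q : ℕ) (m : ℤ) : Polynomial ℤ :=
  C (q : ℤ) * aPoly q₀ q₂ q m * bPoly q₁ q m

/-- `F₀(x) = ∫₀ˣ G(t) dt`, as a polynomial with rational coefficients. -/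
noncomputable def F0 (q₀ q₁ q₂ q : ℕ) (m : ℤ) : Polynomial ℚ :=
  ∑ k ∈ Finset.range ((GPoly q₀ q₁ q₂ q m).natDegree + 1),
    C (((GPoly q₀ q₁ q₂ q m).coeff k : ℚ) / (k + 1)) * X ^ (k + 1)

/-- If `p > m` is a prime such that `f(p)` is squarefree, then
`gcd(q·m, q·p^d + Cᵢ) = 1` and `gcd(q·m, q·p^d + Dⱼ) = 1` for all `i, j`. -/
lemma coeff_prod_linear {ι : Type*} [DecidableEq ι] (c : ℤ) (s : Finset ι) (a : ι → ℤ) :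
    ∃ e : ℕ → ℤ, e s.card = 1 ∧ (∀ k, s.card < k → e k = 0) ∧
      ∀ k, (∏ i ∈ s, (X + C (a i * c))).coeff k = c ^ (s.card - k) * e k := by
  induction s using Finset.induction with
  | empty =>
    refine ⟨fun k => if k = 0 then 1 else 0, by simp, ?_, ?_⟩
    · intro k hk; simp only [Finset.card_empty] at hk
      simp [Nat.pos_iff_ne_zero.mp hk]
    · intro k
      rcases Nat.eq_zero_or_pos k with h | h
      · simp [h]
      · simp [coeff_one, Nat.pos_iff_ne_zero.mp h, (Nat.pos_iff_ne_zero.mp h : k ≠ 0).symm]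
  | @insert j t hj ih =>
    obtain ⟨e, he1, he0, hec⟩ := ih
    refine ⟨fun k => (if k = 0 then 0 else e (k-1)) + a j * e k, ?_, ?_, ?_⟩
    · rw [Finset.card_insert_of_notMem hj]
      simp [he0 _ (Nat.lt_succ_self _), he1]
    · intro k hk
      rw [Finset.card_insert_of_notMem hj] at hk
      show (if k = 0 then 0 else e (k-1)) + a j * e k = 0
      rw [if_neg (by omega), he0 _ (by omega), he0 _ (by omega)]; ring
    · intro k
      rw [Finset.prod_insert hj, Finset.card_insert_of_notMem hj]
      rw [add_mul, coeff_add, coeff_C_mul, hec]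
      rcases Nat.eq_zero_or_pos k with h | h
      · subst h
        simp only [if_pos rfl, mul_coeff_zero, coeff_X_zero, zero_mul, zero_add,
          Nat.sub_zero]
        rw [pow_succ, if_pos trivial]
        ring
      · obtain ⟨k', rfl⟩ : ∃ k', k = k' + 1 := ⟨k - 1, by omega⟩
        rw [coeff_X_mul, hec]
        simp only [Nat.add_sub_cancel, if_neg (Nat.succ_ne_zero k')]
        rcases le_or_gt (k' + 1) t.card with hle | hlt
        · have h1 : t.card + 1 - (k' + 1) = (t.card - (k' + 1)) + 1 := by omega
          have h2 : t.card - k' = (t.card - (k'+1)) + 1 := by omega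
          rw [h1, h2]
          ring
        · rw [he0 _ hlt]
          rcases le_or_gt k' t.card with h2 | h2
          · have : k' = t.card := by omega
            subst this
            simp [he1]
          · rw [he0 _ h2]; ring

lemma key_eval (q₀ q₁ q₂ q : ℕ) (m : ℤ) (hq : Nat.Prime q) (hq3 : 3 ≤ q)
    (hn : q₀ - 1 + (q₁ - 1) + 1 = q) (s₀ : ℤ) :
    ∃ Z : ℤ,
      (F0 q₀ q₁ q₂ q m).eval ((-(s₀ * (m * ((q - 1).factorial : ℤ))) : ℤ) : ℚ) =
        ((m ^ q * (-(s₀ ^ q * ((q - 1).factorial : ℤ) ^ q) + q * Z) : ℤ) : ℚ) := by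
  have hq0 : (q : ℤ) ≠ 0 := Int.natCast_ne_zero.mpr hq.pos.ne'
  set n := q₀ - 1 + (q₁ - 1) with hn'
  set F : ℤ := ((q - 1).factorial : ℤ) with hF
  set c : ℤ := m * F with hc
  set A := (Finset.Icc 1 (q₀ - 1)).disjSum (Finset.Icc 1 (q₁ - 1)) with hA
  set f : ℕ ⊕ ℕ → ℤ := Sum.elim (fun i => (i : ℤ) * q₂) (fun j => (j : ℤ)) with hf
  have hcard : A.card = n := by simp [hA, n]
  obtain ⟨e, he1, he0, hec⟩ := coeff_prod_linear c A f
  rw [hcard] at he1 he0 hec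
  have hG : GPoly q₀ q₁ q₂ q m = C (q : ℤ) * ∏ x ∈ A, (X + C (f x * c)) := by
    rw [hA, GPoly, aPoly, bPoly, mul_assoc, Finset.prod_disjSum]
    congr 1
    congr 1
    · exact Finset.prod_congr rfl fun i _ => by rw [hf, hc, hF]; simp; ring_nf
    · exact Finset.prod_congr rfl fun j _ => by rw [hf, hc, hF]; simp; ring_nf
  have hPdeg : (∏ x ∈ A, (X + C (f x * c))).natDegree = n := by
    rw [natDegree_prod_of_monic _ _ fun i _ => monic_X_add_C _]
    simp only [natDegree_X_add_C]
    simp [hcard]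
  have hdeg : (GPoly q₀ q₁ q₂ q m).natDegree = n := by
    rw [hG, natDegree_C_mul hq0, hPdeg]
  have hGc : ∀ k, (GPoly q₀ q₁ q₂ q m).coeff k = q * (c ^ (n - k) * e k) := by
    intro k; rw [hG, coeff_C_mul, hec]
  refine ⟨∑ k ∈ Finset.range n,
      e k * (-s₀) ^ (k + 1) * (((q - 1).factorial / (k + 1) : ℕ) : ℤ) * F ^ (q - 1), ?_⟩
  rw [F0, eval_finset_sum]
  simp only [eval_mul, eval_pow, eval_C, eval_X, hdeg, hGc]
  rw [Finset.sum_range_succ]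
  have hlast : ((q * (c ^ (n - n) * e n) : ℤ) : ℚ) / ((n : ℚ) + 1) *
      (((-(s₀ * c) : ℤ) : ℚ)) ^ (n + 1) = ((m ^ q * (-(s₀ ^ q * F ^ q)) : ℤ) : ℚ) := by
    have hnq : ((n : ℚ) + 1) = (q : ℚ) := by exact_mod_cast congrArg (Nat.cast : ℕ → ℚ) hn
    have hodd : Odd q := hq.odd_of_ne_two (by omega)
    rw [he1, Nat.sub_self, pow_zero, hnq, hn]
    have : ((-(s₀ * c))^q : ℤ) = m ^ q * (-(s₀ ^ q * F ^ q)) := by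
      rw [hodd.neg_pow, hc]; ring
    push_cast [← this]
    field_simp
  have hterm : ∀ k ∈ Finset.range n,
      ((q * (c ^ (n - k) * e k) : ℤ) : ℚ) / ((k : ℚ) + 1) * (((-(s₀ * c) : ℤ) : ℚ)) ^ (k + 1) =
        (((q : ℤ) * m ^ q *
          (e k * (-s₀) ^ (k + 1) * (((q - 1).factorial / (k + 1) : ℕ) : ℤ) * F ^ (q - 1)) : ℤ) : ℚ) := by
    intro k hk
    rw [Finset.mem_range] at hk
    have hd1 : (k + 1) ∣ (q - 1).factorial := Nat.dvd_factorial k.succ_pos (by omega)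
    have hk1 : ((k : ℚ) + 1) ≠ 0 := by positivity
    have key2 : F ^ q = ((k : ℤ) + 1) * (((q - 1).factorial / (k + 1) : ℕ) : ℤ) * F ^ (q - 1) := by
      have h1 : ((k + 1) * ((q - 1).factorial / (k + 1)) : ℕ) = (q - 1).factorial :=
        Nat.mul_div_cancel' hd1
      have h2 : F ^ q = F * F ^ (q - 1) := by
        conv_lhs => rw [show q = (q - 1) + 1 by omega, pow_succ]
        ring
      have h1' : ((k : ℤ) + 1) * (((q - 1).factorial / (k + 1) : ℕ) : ℤ) = F := by
        rw [hF]; exact_mod_cast congrArg (Nat.cast : ℕ → ℤ) h1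
      rw [h2, ← h1']
    have hckq : c ^ (n - k) * c ^ (k + 1) = m ^ q * F ^ q := by
      rw [← pow_add, show n - k + (k + 1) = q by omega, hc, mul_pow]
    rw [div_mul_eq_mul_div, div_eq_iff hk1]
    have hgoal : (q : ℤ) * (c ^ (n - k) * e k) * (-(s₀ * c)) ^ (k + 1) =
        (q : ℤ) * m ^ q *
          (e k * (-s₀) ^ (k + 1) * (((q - 1).factorial / (k + 1) : ℕ) : ℤ) * F ^ (q - 1)) *
          ((k : ℤ) + 1) := by
      have hne : ((-(s₀ * c)) : ℤ) ^ (k + 1) = (-s₀) ^ (k + 1) * c ^ (k + 1) := by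
        rw [← neg_mul, mul_pow]
      rw [hne]
      calc (q : ℤ) * (c ^ (n - k) * e k) * ((-s₀) ^ (k + 1) * c ^ (k + 1))
          = (q : ℤ) * e k * (-s₀) ^ (k + 1) * (c ^ (n - k) * c ^ (k + 1)) := by ring
        _ = (q : ℤ) * e k * (-s₀) ^ (k + 1) * (m ^ q * F ^ q) := by rw [hckq]
        _ = _ := by rw [key2]; ring
    exact_mod_cast hgoal
  rw [Finset.sum_congr rfl hterm, hlast, ← Int.cast_sum, ← Int.cast_add]
  norm_cast
  rw [← Finset.mul_sum]
  ring

lemma main_aux (q₀ q₁ q₂ q : ℕ) (m : ℤ) (hq : Nat.Prime q) (hq3 : 3 ≤ q)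
    (hn : q₀ - 1 + (q₁ - 1) + 1 = q) (hm : 1 ≤ m) (hqm : ¬ (q:ℤ) ∣ m)
    (s₀ Ci : ℤ) (hs₀ : ((s₀ : ℤ) : ZMod q) ≠ 0)
    (hCi : (Ci : ℚ) * m = (F0 q₀ q₁ q₂ q m).eval ((-(s₀ * (m * ((q-1).factorial : ℤ))) : ℤ) : ℚ))
    (p : ℕ) (hp : Nat.Prime p) (hpm : m < (p:ℤ)) (d : ℕ) :
    IsCoprime ((q:ℤ) * m) ((q:ℤ) * (p:ℤ)^d + Ci) := by
  haveI : Fact q.Prime := ⟨hq⟩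
  have hm0 : m ≠ 0 := by linarith
  obtain ⟨Z, hZ⟩ := key_eval q₀ q₁ q₂ q m hq hq3 hn s₀
  rw [hZ] at hCi
  set R : ℤ := -(s₀ ^ q * ((q - 1).factorial : ℤ) ^ q) + q * Z with hR
  have hint : Ci * m = m ^ q * R := by exact_mod_cast hCi
  have hCieq : Ci = m ^ (q - 1) * R := by
    apply mul_right_cancel₀ hm0
    rw [hint]
    conv_lhs => rw [show q = (q-1)+1 by omega, pow_succ]
    ring
  have hmdvd : m ∣ Ci := by
    rw [hCieq]
    exact Dvd.dvd.mul_right (dvd_pow_self m (by omega)) R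
  have hqnd : ¬ (q:ℤ) ∣ Ci := by
    intro hdvd
    have h0 : ((Ci : ℤ) : ZMod q) = 0 := by
      rw [ZMod.intCast_zmod_eq_zero_iff_dvd]; exact_mod_cast hdvd
    have hRz : ((R : ℤ) : ZMod q) = (s₀ : ZMod q) := by
      rw [hR]
      push_cast [ZMod.natCast_self, ZMod.wilsons_lemma]
      rw [(hq.odd_of_ne_two (by omega)).neg_one_pow, ZMod.pow_card]
      ring
    have hmz : ((m : ℤ) : ZMod q) ≠ 0 := by
      rw [Ne, ZMod.intCast_zmod_eq_zero_iff_dvd]; exact_mod_cast hqm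
    have hfin : ((Ci : ℤ) : ZMod q) = (s₀ : ZMod q) := by
      rw [hCieq]
      push_cast
      rw [hRz, ZMod.pow_card_sub_one_eq_one hmz, one_mul]
    rw [h0] at hfin
    exact hs₀ hfin.symm
  obtain ⟨w, hw⟩ := hmdvd
  apply IsCoprime.mul_left
  · rw [(Nat.prime_iff_prime_int.mp hq).coprime_iff_not_dvd]
    intro hdvd
    exact hqnd ((dvd_add_right ⟨(p:ℤ)^d, rfl⟩).mp hdvd)
  · have hM : m = ((m.toNat : ℕ) : ℤ) := (Int.toNat_of_nonneg (by linarith)).symm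
    have base : IsCoprime m ((q:ℤ) * (p:ℤ)^d) := by
      have h1 : Nat.Coprime m.toNat q := Nat.Coprime.symm (hq.coprime_iff_not_dvd.mpr (by
        intro hdvd
        exact hqm (by rw [hM]; exact_mod_cast hdvd)))
      have h2 : Nat.Coprime m.toNat p := Nat.Coprime.symm (hp.coprime_iff_not_dvd.mpr (by
        intro hdvd
        have := Nat.le_of_dvd (by omega) hdvd
        omega))
      have h3 : Nat.Coprime m.toNat (q * p ^ d) := h1.mul_right (h2.pow_right d)
      have h4 := Nat.isCoprime_iff_coprime.mpr h3
      rw [← hM] at h4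
      push_cast at h4
      exact h4
    rw [hw]
    exact base.add_mul_left_right w

theorem coprime_qm (q₀ q₁ q₂ q : ℕ) (m : ℤ)
    (hq₀ : Nat.Prime q₀) (hq₁ : Nat.Prime q₁) (hlt : q₀ < q₁)
    (hq : Nat.Prime q) (hq3 : 3 ≤ q) (hqeq : q = q₀ + q₁ - 1)
    (hm : 1 ≤ m) (hmsf : Squarefree m) (hqm : ¬ (q : ℤ) ∣ m)
    (hq₂ : Nat.Prime q₂) (hcong : (q₂ : ℤ) ≡ -1 [ZMOD (q : ℤ)])
    (d : ℕ) (hd : 1 ≤ d)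
    (Cf Df : ℕ → ℤ)
    (hC : ∀ i ∈ Finset.Icc 1 (q₀ - 1),
      (Cf i : ℚ) * (m : ℚ) =
        (F0 q₀ q₁ q₂ q m).eval ((-((i : ℤ) * q₂ * m * (Nat.factorial (q - 1) : ℤ)) : ℤ) : ℚ))
    (hD : ∀ j ∈ Finset.Icc 1 (q₁ - 1),
      (Df j : ℚ) * (m : ℚ) =
        (F0 q₀ q₁ q₂ q m).eval ((-((j : ℤ) * m * (Nat.factorial (q - 1) : ℤ)) : ℤ) : ℚ))
    (p : ℕ) (hp : Nat.Prime p) (hpm : m < (p : ℤ))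
    (hsf : Squarefree
      (((∏ i ∈ Finset.Icc 1 (q₀ - 1), (C (q : ℤ) * X ^ d + C (Cf i))) *
        ∏ j ∈ Finset.Icc 1 (q₁ - 1), (C (q : ℤ) * X ^ d + C (Df j))).eval (p : ℤ))) :
    (∀ i ∈ Finset.Icc 1 (q₀ - 1), IsCoprime ((q : ℤ) * m) ((q : ℤ) * (p : ℤ) ^ d + Cf i)) ∧
    (∀ j ∈ Finset.Icc 1 (q₁ - 1), IsCoprime ((q : ℤ) * m) ((q : ℤ) * (p : ℤ) ^ d + Df j)) := by
  have hq₀2 := hq₀.two_le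
  have hq₁2 := hq₁.two_le
  have hn : q₀ - 1 + (q₁ - 1) + 1 = q := by omega
  haveI : Fact q.Prime := ⟨hq⟩
  have hq₂z : ((q₂ : ℕ) : ZMod q) = -1 := by
    have h := (ZMod.intCast_eq_intCast_iff _ _ _).mpr hcong
    push_cast at h ⊢
    exact h
  constructor
  · intro i hi
    rw [Finset.mem_Icc] at hi
    have hiz : (((i : ℤ) * q₂ : ℤ) : ZMod q) ≠ 0 := by
      push_cast
      rw [hq₂z]
      intro h
      have h2 : ((i : ℕ) : ZMod q) = 0 := by
        have := mul_eq_zero.mp h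
        rcases this with h' | h'
        · exact h'
        · exact absurd h' (by intro hh; exact one_ne_zero (by rw [← neg_neg (1 : ZMod q), hh, neg_zero]))
      rw [ZMod.natCast_eq_zero_iff] at h2
      have := Nat.le_of_dvd (by omega) h2
      omega
    have hCi := hC i (Finset.mem_Icc.mpr hi)
    rw [show ((-((i : ℤ) * q₂ * m * ((q-1).factorial : ℤ))) : ℤ) =
        -((i : ℤ) * q₂ * (m * ((q-1).factorial : ℤ))) from by ring] at hCi
    exact main_aux q₀ q₁ q₂ q m hq hq3 hn hm hqm _ _ hiz hCi p hp hpm d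
  · intro j hj
    rw [Finset.mem_Icc] at hj
    have hjz : (((j : ℤ) : ℤ) : ZMod q) ≠ 0 := by
      push_cast
      intro h
      rw [ZMod.natCast_eq_zero_iff] at h
      have := Nat.le_of_dvd (by omega) h
      omega
    have hDj := hD j (Finset.mem_Icc.mpr hj)
    rw [show ((-((j : ℤ) * m * ((q-1).factorial : ℤ))) : ℤ) =
        -((j : ℤ) * (m * ((q-1).factorial : ℤ))) from by ring] at hDj
    exact main_aux q₀ q₁ q₂ q m hq hq3 hn hm hqm _ _ hjz hDj p hp hpm d
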